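/- Let T* be a set of integers ≥ 2 and let s ∈ ℂ be such that ∑_{n∈T*} n^{−Re(s)} < 1. Then the family (N(c)^{−s}) indexed by compositions c ∈ C_{T*} is summable, 1 − ∑_{n∈T*} n^{−s} ≠ 0, and ∑_{c∈C_{T*}} N(c)^{−s} = 1/(1 − ∑_{n∈T*} n^{−s}). -/

import Mathlib

open Complex

/-- cpow of a product of positive naturals is the product of cpows. -/
lemma aux_list_prod_cpow (s : ℂ) :
    ∀ (l : List ℕ), (∀ i ∈ l, 0 < i) →
      ((l.prod : ℕ) : ℂ) ^ (-s) = (l.map (fun a : ℕ => ((a : ℕ) : ℂ) ^ (-s))).prod := by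
  intro l
  induction l with
  | nil => intro _; simp
  | cons a t ih =>
    intro h
    have ha : 0 < a := h a List.mem_cons_self
    have hprod : (0 : ℝ) ≤ (t.prod : ℝ) := by positivity
    have : ((a * t.prod : ℕ) : ℂ) = (((a : ℕ) : ℝ) : ℂ) * (((t.prod : ℕ) : ℝ) : ℂ) := by
      rw [Complex.ofReal_natCast, Complex.ofReal_natCast]; exact Nat.cast_mul a t.prod
    rw [List.prod_cons, List.map_cons, List.prod_cons, this,
      mul_cpow_ofReal_nonneg (by positivity) hprod, Complex.ofReal_natCast,
      Complex.ofReal_natCast, ih (fun i hi => h i (List.mem_cons_of_mem a hi))]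

/-- Sum of products of a summable-in-norm family over tuples. -/
lemma aux_pi_tuple {𝕜 : Type*} [NormedField 𝕜] [CompleteSpace 𝕜] {β : Type*}
    (f : β → 𝕜) (hf : Summable fun b => ‖f b‖) :
    ∀ n : ℕ, Summable (fun v : Fin n → β => ‖∏ i, f (v i)‖) ∧
      ∑' v : Fin n → β, ∏ i, f (v i) = (∑' b, f b) ^ n := by
  intro n
  induction n with
  | zero =>
    constructor
    · exact (hasSum_fintype _).summable
    · simp [tsum_fintype]
  | succ n ih =>
    obtain ⟨ihs, ihe⟩ := ih
    have hcomp : ∀ p : β × (Fin n → β),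
        (∏ i, f (Fin.consEquiv (fun _ : Fin (n + 1) => β) p i)) = f p.1 * ∏ i, f (p.2 i) := by
      intro p
      rw [Fin.prod_univ_succ]
      simp [Fin.consEquiv]
    have hsum_prod : Summable (fun p : β × (Fin n → β) => ‖f p.1 * ∏ i, f (p.2 i)‖) :=
      Summable.mul_norm (f := f) (g := fun v : Fin n → β => ∏ i, f (v i)) hf ihs
    constructor
    · exact (Fin.consEquiv (fun _ : Fin (n + 1) => β)).summable_iff.mp
        (hsum_prod.congr (fun p => by simp only [Function.comp_apply, ← hcomp p, norm_mul]))
    · calc ∑' v : Fin (n + 1) → β, ∏ i, f (v i)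
          = ∑' p : β × (Fin n → β), ∏ i, f (Fin.consEquiv (fun _ : Fin (n + 1) => β) p i) :=
            ((Fin.consEquiv (fun _ : Fin (n + 1) => β)).tsum_eq _).symm
        _ = ∑' p : β × (Fin n → β), f p.1 * ∏ i, f (p.2 i) := tsum_congr hcomp
        _ = (∑' b, f b) * ∑' v : Fin n → β, ∏ i, f (v i) :=
            (tsum_mul_tsum_of_summable_norm (f := f)
              (g := fun v : Fin n → β => ∏ i, f (v i)) hf ihs).symm
        _ = (∑' b, f b) ^ (n + 1) := by rw [ihe, ← pow_succ']

theorem composition_zeta_function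
    (T : Set ℕ) (hT : ∀ n ∈ T, 2 ≤ n) (s : ℂ)
    (hsum : Summable (fun n : T => ((n : ℕ) : ℝ) ^ (-s.re)))
    (hlt : ∑' n : T, ((n : ℕ) : ℝ) ^ (-s.re) < 1) :
    Summable (fun c : {l : List ℕ // ∀ i ∈ l, i ∈ T} =>
        ((c.val.prod : ℕ) : ℂ) ^ (-s)) ∧
    1 - ∑' n : T, ((n : ℕ) : ℂ) ^ (-s) ≠ 0 ∧
    ∑' c : {l : List ℕ // ∀ i ∈ l, i ∈ T}, ((c.val.prod : ℕ) : ℂ) ^ (-s)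
      = (1 - ∑' n : T, ((n : ℕ) : ℂ) ^ (-s))⁻¹ := by
  classical
  set fc : T → ℂ := fun n => ((n : ℕ) : ℂ) ^ (-s) with hfc
  have hpos : ∀ n : T, 0 < (n : ℕ) := fun n => lt_of_lt_of_le two_pos (hT n n.2)
  have hnorm : ∀ n : T, ‖fc n‖ = ((n : ℕ) : ℝ) ^ (-s.re) := by
    intro n
    rw [hfc]
    rw [Complex.norm_natCast_cpow_of_pos (hpos n), Complex.neg_re]
  have hfnorm : Summable fun n : T => ‖fc n‖ := hsum.congr (fun n => (hnorm n).symm)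
  have htsum_norm : (∑' n : T, ‖fc n‖) = ∑' n : T, ((n : ℕ) : ℝ) ^ (-s.re) :=
    tsum_congr hnorm
  have hanorm : ‖∑' n : T, fc n‖ < 1 :=
    lt_of_le_of_lt (norm_tsum_le_tsum_norm hfnorm) (htsum_norm ▸ hlt)
  have hne : (1 : ℂ) - ∑' n : T, fc n ≠ 0 := by
    refine sub_ne_zero.mpr ?_
    intro h
    rw [← h, norm_one] at hanorm
    exact lt_irrefl _ hanorm
  -- the equivalence with lists over T
  let e1 : {l : List ℕ // ∀ i ∈ l, i ∈ T} ≃ List T :=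
    { toFun := fun c => c.val.pmap (fun a h => (⟨a, h⟩ : T)) c.2
      invFun := fun L => ⟨L.map Subtype.val, fun i hi => by
        obtain ⟨b, _, rfl⟩ := List.mem_map.mp hi; exact b.2⟩
      left_inv := fun c => Subtype.ext (by simp [List.map_pmap])
      right_inv := fun L => by
        induction L with
        | nil => rfl
        | cons b t ih => exact List.cons_eq_cons.mpr ⟨rfl, ih⟩ }
  let E : {l : List ℕ // ∀ i ∈ l, i ∈ T} ≃ Σ n : ℕ, Fin n → T :=
    e1.trans List.equivSigmaTuple
  set Fc : (Σ n : ℕ, Fin n → T) → ℂ := fun p => ∏ i, fc (p.2 i) with hFcdef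
  have key : ∀ c : {l : List ℕ // ∀ i ∈ l, i ∈ T},
      ((c.val.prod : ℕ) : ℂ) ^ (-s) = Fc (E c) := by
    intro c
    have hpos' : ∀ i ∈ c.val, 0 < i :=
      fun i hi => lt_of_lt_of_le two_pos (hT i (c.2 i hi))
    have h1 : Fc (E c) = ((e1 c).map fc).prod := by
      show (∏ i, fc ((e1 c).get i)) = ((e1 c).map fc).prod
      simp only [List.get_eq_getElem]
      rw [← List.ofFn_getElem_eq_map (e1 c) fc, List.prod_ofFn]
    rw [aux_list_prod_cpow s c.val hpos', h1]
    show _ = (List.map fc (c.val.pmap (fun a h => (⟨a, h⟩ : T)) c.2)).prod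
    congr 1
    rw [List.map_pmap]
    exact (List.pmap_eq_map _).symm
  -- real majorant
  set g : T → ℝ := fun n => ‖fc n‖ with hgdef
  have hg0 : ∀ n : T, 0 ≤ g n := fun n => norm_nonneg _
  have hgnorm : Summable fun n : T => ‖g n‖ :=
    hfnorm.congr (fun n => (norm_norm (fc n)).symm)
  have hauxg := aux_pi_tuple (𝕜 := ℝ) g hgnorm
  have hauxf := aux_pi_tuple (𝕜 := ℂ) fc hfnorm
  have hfiber_nonneg : ∀ (n : ℕ) (v : Fin n → T), 0 ≤ ∏ i, g (v i) :=
    fun n v => Finset.prod_nonneg (fun i _ => hg0 _)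
  have hfiberg : ∀ n : ℕ, Summable (fun v : Fin n → T => ∏ i, g (v i)) := by
    intro n
    exact ((hauxg n).1).congr (fun v => Real.norm_of_nonneg (hfiber_nonneg n v))
  have hfibergsum : ∀ n : ℕ, (∑' v : Fin n → T, ∏ i, g (v i)) = (∑' b : T, g b) ^ n :=
    fun n => (hauxg n).2
  have hglt : (∑' b : T, g b) < 1 := by
    rw [hgdef, htsum_norm]; exact hlt
  have hgle : 0 ≤ ∑' b : T, g b := tsum_nonneg hg0
  have hGsigma : Summable (fun p : Σ n : ℕ, Fin n → T => ∏ i, g (p.2 i)) := by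
    refine (summable_sigma_of_nonneg (f := fun p : Σ n : ℕ, Fin n → T => ∏ i, g (p.2 i))
      (fun p => hfiber_nonneg p.1 p.2)).mpr ⟨hfiberg, ?_⟩
    refine Summable.congr (summable_geometric_of_lt_one hgle hglt) ?_
    intro n
    exact (hfibergsum n).symm
  have hFnorm : ∀ p : Σ n : ℕ, Fin n → T, ‖Fc p‖ = ∏ i, g (p.2 i) := by
    intro p
    rw [hFcdef]
    exact norm_prod _ _
  have hFsigma : Summable Fc :=
    Summable.of_norm (hGsigma.congr (fun p => (hFnorm p).symm))
  have hfiberf : ∀ n : ℕ, Summable (fun v : Fin n → T => Fc ⟨n, v⟩) :=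
    fun n => Summable.of_norm (hauxf n).1
  have htsumF : ∑' p : Σ n : ℕ, Fin n → T, Fc p = (1 - ∑' n : T, fc n)⁻¹ := by
    rw [hFsigma.tsum_sigma' hfiberf]
    calc ∑' (n : ℕ) (v : Fin n → T), Fc ⟨n, v⟩
        = ∑' n : ℕ, (∑' b : T, fc b) ^ n := tsum_congr (fun n => (hauxf n).2)
      _ = (1 - ∑' b : T, fc b)⁻¹ := tsum_geometric_of_norm_lt_one hanorm
  have hSummable : Summable (fun c : {l : List ℕ // ∀ i ∈ l, i ∈ T} =>
      ((c.val.prod : ℕ) : ℂ) ^ (-s)) := by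
    refine Summable.congr ?_ (fun c => (key c).symm)
    exact (E.summable_iff (f := Fc)).mpr hFsigma
  refine ⟨hSummable, hne, ?_⟩
  calc ∑' c : {l : List ℕ // ∀ i ∈ l, i ∈ T}, ((c.val.prod : ℕ) : ℂ) ^ (-s)
      = ∑' c : {l : List ℕ // ∀ i ∈ l, i ∈ T}, Fc (E c) := tsum_congr key
    _ = ∑' p : Σ n : ℕ, Fin n → T, Fc p := E.tsum_eq Fc
    _ = (1 - ∑' n : T, fc n)⁻¹ := htsumF
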